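/- Let G be a countable group, 𝒜 a finite alphabet with |𝒜| ≥ 2, k ∈ ℕ with k ≥ 1, and S ⊆ G a finite set with |S| ≥ k. Let T ⊆ G be a finite set such that k·log_{|𝒜|}|S| < |T|/(2k) and |T △ Ts| < |T|/(2k²) for each s ∈ S. Then the number of patterns w ∈ 𝒜^T having k periods from S is at most |𝒜|^(2|T|/k). -/

import Mathlib

/-- A pattern `w : T → 𝒜` has `k` periods from `S` if there are `k` distinct
elements `p ∈ S` such that `w(g) = w(g·p)` whenever `g, g·p ∈ T`. -/
def HasPeriods {G : Type*} [Group G] {A : Type*} (k : ℕ) (S T : Finset G)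
    (w : T → A) : Prop :=
  ∃ P : Finset G, P ⊆ S ∧ P.card = k ∧
    ∀ p ∈ P, ∀ (g : G) (hg : g ∈ T) (hgp : g * p ∈ T), w ⟨g, hg⟩ = w ⟨g * p, hgp⟩

/-- The relation on `T` relating `g` and `g·p` for `p ∈ P`. -/
def perRel {G : Type*} [Group G] (P T : Finset G) (a b : T) : Prop :=
  ∃ p ∈ P, (b : G) = (a : G) * p ∨ (a : G) = (b : G) * p

/-- A pattern with all periods in `P` respects the generated equivalence. -/
theorem perRel_respects {G A : Type*} [Group G] (P T : Finset G) (w : T → A)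
    (hper : ∀ p ∈ P, ∀ (g : G) (hg : g ∈ T) (hgp : g * p ∈ T),
      w ⟨g, hg⟩ = w ⟨g * p, hgp⟩) :
    ∀ a b : T, Relation.EqvGen (perRel P T) a b → w a = w b := by
  intro a b h
  induction h with
  | rel a b hab =>
    obtain ⟨p, hp, h | h⟩ := hab
    · have hb' : (a : G) * p ∈ T := h ▸ b.2
      have key := hper p hp a a.2 hb'
      have e : (⟨(a : G) * p, hb'⟩ : T) = b := Subtype.ext h.symm
      rw [e] at key
      exact key
    · have ha' : (b : G) * p ∈ T := h ▸ a.2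
      have key := hper p hp b b.2 ha'
      have e : (⟨(b : G) * p, ha'⟩ : T) = a := Subtype.ext h.symm
      rw [e] at key
      exact key.symm
  | refl => rfl
  | symm _ _ _ ih => exact ih.symm
  | trans _ _ _ _ _ ih1 ih2 => exact ih1.trans ih2

/-- Bound on the number of equivalence classes. -/
theorem quot_card_bound {G : Type*} [Group G] [DecidableEq G]
    (k : ℕ) (hk : 1 ≤ k) (S T P : Finset G) (hPS : P ⊆ S) (hPk : P.card = k)
    (h2 : ∀ s ∈ S,
      ((((T \ T.image (· * s)) ∪ (T.image (· * s) \ T)).card : ℝ)) < (T.card : ℝ) / (2 * k ^ 2)) :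
    (Nat.card (Quotient (Relation.EqvGen.setoid (perRel P T))) : ℝ)
      ≤ 3 * (T.card : ℝ) / (2 * k) := by
  classical
  set sd := Relation.EqvGen.setoid (perRel P T) with hsd
  haveI : Fintype (Quotient sd) := Fintype.ofFinite _
  set m : T → Quotient sd := fun g => Quotient.mk sd g with hm
  have hm_surj : ∀ q : Quotient sd, ∃ g : T, m g = q := fun q => Quot.exists_rep q
  -- the bad set
  set B : Finset T := Finset.univ.filter (fun g => ∃ p ∈ P, (g : G) * p ∉ T) with hB
  set QG : Finset (Quotient sd) :=
    Finset.univ.filter (fun q => ∃ g : T, g ∉ B ∧ m g = q) with hQG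
  set QB : Finset (Quotient sd) :=
    Finset.univ.filter (fun q => ¬ ∃ g : T, g ∉ B ∧ m g = q) with hQB
  have hsplit : QG.card + QB.card = Fintype.card (Quotient sd) := by
    rw [hQG, hQB]
    exact Finset.card_filter_add_card_filter_not _
  -- |QB| ≤ |B|
  have hQB_le : QB.card ≤ B.card := by
    refine Finset.card_le_card_of_injOn (fun q => (hm_surj q).choose) ?_ ?_
    · intro q hq
      rw [hQB, Finset.mem_coe, Finset.mem_filter] at hq
      by_contra hnB
      exact hq.2 ⟨_, hnB, (hm_surj q).choose_spec⟩
    · intro q1 _ q2 _ h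
      have h' : (hm_surj q1).choose = (hm_surj q2).choose := h
      have e1 := (hm_surj q1).choose_spec
      have e2 := (hm_surj q2).choose_spec
      rw [← e1, ← e2, h']
  -- fibers of good classes have at least k elements
  have hfiber : ∀ q ∈ QG, k ≤ (Finset.univ.filter (fun g : T => m g = q)).card := by
    intro q hq
    rw [hQG, Finset.mem_filter] at hq
    obtain ⟨g, hgB, hgq⟩ := hq.2
    have hgood : ∀ p ∈ P, (g : G) * p ∈ T := by
      intro p hp
      by_contra hn
      apply hgB
      rw [hB, Finset.mem_filter]
      exact ⟨Finset.mem_univ _, p, hp, hn⟩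
    rw [← hPk]
    refine Finset.card_le_card_of_injOn
      (fun p => if h : (g : G) * p ∈ T then (⟨(g : G) * p, h⟩ : T) else g) ?_ ?_
    · intro p hp
      simp only [dif_pos (hgood p hp), Finset.mem_coe, Finset.mem_filter, Finset.mem_univ, true_and]
      rw [← hgq]
      apply Quotient.sound
      show Relation.EqvGen (perRel P T) _ _
      exact Relation.EqvGen.symm _ _ (Relation.EqvGen.rel _ _ ⟨p, hp, Or.inl rfl⟩)
    · intro p1 hp1 p2 hp2 h
      have e1 := hgood p1 (Finset.mem_coe.mp hp1)
      have e2 := hgood p2 (Finset.mem_coe.mp hp2)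
      simp only [dif_pos e1, dif_pos e2] at h
      exact mul_left_cancel (Subtype.ext_iff.mp h)
  -- k * |QG| ≤ |T|
  have hQG_le : k * QG.card ≤ T.card := by
    have hdisj : ∀ q1 ∈ QG, ∀ q2 ∈ QG, q1 ≠ q2 →
        Disjoint (Finset.univ.filter (fun g : T => m g = q1))
          (Finset.univ.filter (fun g : T => m g = q2)) := by
      intro q1 _ q2 _ hne
      rw [Finset.disjoint_filter]
      intro g _ h1 h2
      exact hne (h1 ▸ h2 ▸ rfl)
    calc k * QG.card = ∑ _q ∈ QG, k := by rw [Finset.sum_const, smul_eq_mul, mul_comm]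
      _ ≤ ∑ q ∈ QG, (Finset.univ.filter (fun g : T => m g = q)).card :=
          Finset.sum_le_sum hfiber
      _ = (QG.biUnion (fun q => Finset.univ.filter (fun g : T => m g = q))).card :=
          (Finset.card_biUnion hdisj).symm
      _ ≤ Fintype.card T := Finset.card_le_card (Finset.subset_univ _) |>.trans
          (le_of_eq (Finset.card_univ))
      _ = T.card := Fintype.card_coe T
  -- |B| bound
  have hB_le : B.card ≤ ∑ p ∈ P, (Finset.univ.filter (fun g : T => (g : G) * p ∉ T)).card := by
    calc B.card ≤ (P.biUnion (fun p => Finset.univ.filter (fun g : T => (g : G) * p ∉ T))).card := by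
          apply Finset.card_le_card
          intro g hg
          rw [hB, Finset.mem_filter] at hg
          obtain ⟨p, hp, hn⟩ := hg.2
          exact Finset.mem_biUnion.mpr ⟨p, hp, by simp [hn]⟩
      _ ≤ _ := Finset.card_biUnion_le
  have hbadp : ∀ p ∈ P, ((Finset.univ.filter (fun g : T => (g : G) * p ∉ T)).card : ℝ)
      < (T.card : ℝ) / (2 * k ^ 2) := by
    intro p hp
    refine lt_of_le_of_lt ?_ (h2 p (hPS hp))
    have : (Finset.univ.filter (fun g : T => (g : G) * p ∉ T)).card
        ≤ ((T \ T.image (· * p)) ∪ (T.image (· * p) \ T)).card := by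
      refine Finset.card_le_card_of_injOn (fun g => (g : G) * p) ?_ ?_
      · intro g hg
        rw [Finset.mem_coe, Finset.mem_filter] at hg
        rw [Finset.mem_coe]
        apply Finset.mem_union_right
        rw [Finset.mem_sdiff]
        exact ⟨Finset.mem_image.mpr ⟨g, g.2, rfl⟩, hg.2⟩
      · intro g1 _ g2 _ h
        exact Subtype.ext (mul_right_cancel h)
    exact_mod_cast this
  -- assemble
  have hk0 : (0:ℝ) < (k : ℝ) := by exact_mod_cast hk
  have hQGr : (QG.card : ℝ) ≤ (T.card : ℝ) / k := by
    rw [le_div_iff₀ hk0]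
    calc (QG.card : ℝ) * k = ((k * QG.card : ℕ) : ℝ) := by push_cast; ring
      _ ≤ (T.card : ℝ) := by exact_mod_cast hQG_le
  have hQBr : (QB.card : ℝ) ≤ (T.card : ℝ) / (2 * k) := by
    calc (QB.card : ℝ)
        ≤ ∑ p ∈ P, ((Finset.univ.filter (fun g : T => (g : G) * p ∉ T)).card : ℝ) := by
          exact_mod_cast le_trans hQB_le hB_le
      _ ≤ ∑ _p ∈ P, (T.card : ℝ) / (2 * k ^ 2) :=
          Finset.sum_le_sum (fun p hp => (hbadp p hp).le)
      _ = k * ((T.card : ℝ) / (2 * k ^ 2)) := by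
          rw [Finset.sum_const, hPk, nsmul_eq_mul]
      _ = (T.card : ℝ) / (2 * k) := by field_simp
  have hcard : (Nat.card (Quotient sd) : ℝ) = (QG.card : ℝ) + (QB.card : ℝ) := by
    rw [Nat.card_eq_fintype_card, ← hsplit]; push_cast; ring
  rw [hcard]
  calc (QG.card : ℝ) + (QB.card : ℝ) ≤ (T.card : ℝ) / k + (T.card : ℝ) / (2 * k) :=
        add_le_add hQGr hQBr
    _ = 3 * (T.card : ℝ) / (2 * k) := by field_simp; ring

/-- If `k·log_{|𝒜|}|S| < |T|/(2k)` and `|T △ Ts| < |T|/(2k²)` for every `s ∈ S`,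
then the number of patterns `w ∈ 𝒜^T` having `k` periods from `S` is at most
`|𝒜|^(2|T|/k)`. -/
theorem card_patterns_with_periods_le {G A : Type*} [Group G] [Countable G] [DecidableEq G]
    [Fintype A] (hA : 2 ≤ Fintype.card A)
    (k : ℕ) (hk : 1 ≤ k) (S T : Finset G) (hSk : k ≤ S.card)
    (h1 : (k : ℝ) * Real.logb (Fintype.card A) S.card < (T.card : ℝ) / (2 * k))
    (h2 : ∀ s ∈ S,
      ((((T \ T.image (· * s)) ∪ (T.image (· * s) \ T)).card : ℝ)) < (T.card : ℝ) / (2 * k ^ 2)) :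
    (Nat.card {w : T → A // HasPeriods k S T w} : ℝ)
      ≤ (Fintype.card A : ℝ) ^ (2 * (T.card : ℝ) / k) := by
  classical
  have ha1 : (1:ℝ) < (Fintype.card A : ℝ) := by exact_mod_cast lt_of_lt_of_le one_lt_two hA
  have ha0 : (0:ℝ) < (Fintype.card A : ℝ) := lt_trans one_pos ha1
  have hk0 : (0:ℝ) < (k:ℝ) := by exact_mod_cast hk
  haveI hQfin : ∀ P : { P : Finset G // P ∈ S.powersetCard k },
      Fintype (Quotient (Relation.EqvGen.setoid (perRel P.1 T))) := fun P => Fintype.ofFinite _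
  haveI hQdec : ∀ P : { P : Finset G // P ∈ S.powersetCard k },
      DecidableEq (Quotient (Relation.EqvGen.setoid (perRel P.1 T))) := fun P => Classical.decEq _
  set Φ : {w : T → A // HasPeriods k S T w} →
      Σ P : { P : Finset G // P ∈ S.powersetCard k },
        (Quotient (Relation.EqvGen.setoid (perRel P.1 T)) → A) :=
    fun x => ⟨⟨x.2.choose, Finset.mem_powersetCard.mpr ⟨x.2.choose_spec.1, x.2.choose_spec.2.1⟩⟩,
      Quotient.lift x.1 (perRel_respects _ T x.1 x.2.choose_spec.2.2)⟩ with hΦ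
  have hΦinj : Function.Injective Φ := by
    intro x y h
    have hx : x.1 = fun g => (Φ x).2 (Quotient.mk _ g) := rfl
    have hy : y.1 = fun g => (Φ y).2 (Quotient.mk _ g) := rfl
    apply Subtype.ext
    rw [hx, hy, h]
  have hcard_le : Nat.card {w : T → A // HasPeriods k S T w}
      ≤ Nat.card (Σ P : { P : Finset G // P ∈ S.powersetCard k },
        (Quotient (Relation.EqvGen.setoid (perRel P.1 T)) → A)) :=
    Nat.card_le_card_of_injective Φ hΦinj
  have hsigma : (Nat.card (Σ P : { P : Finset G // P ∈ S.powersetCard k },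
        (Quotient (Relation.EqvGen.setoid (perRel P.1 T)) → A)) : ℝ)
      ≤ ((S.card : ℝ) ^ (k:ℕ)) * (Fintype.card A : ℝ) ^ (3 * (T.card : ℝ) / (2 * k)) := by
    rw [Nat.card_eq_fintype_card, Fintype.card_sigma]
    push_cast
    calc (∑ P : { P : Finset G // P ∈ S.powersetCard k },
          (Fintype.card (Quotient (Relation.EqvGen.setoid (perRel P.1 T)) → A) : ℝ))
        ≤ ∑ _P : { P : Finset G // P ∈ S.powersetCard k },
            (Fintype.card A : ℝ) ^ (3 * (T.card : ℝ) / (2 * k)) := by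
          apply Finset.sum_le_sum
          intro P _
          rw [Fintype.card_fun]
          have hqb := quot_card_bound k hk S T P.1
            (Finset.mem_powersetCard.mp P.2).1 (Finset.mem_powersetCard.mp P.2).2 h2
          rw [Nat.card_eq_fintype_card] at hqb
          calc ((Fintype.card A ^ Fintype.card (Quotient (Relation.EqvGen.setoid (perRel P.1 T))) : ℕ) : ℝ)
              = (Fintype.card A : ℝ)
                  ^ ((Fintype.card (Quotient (Relation.EqvGen.setoid (perRel P.1 T))) : ℝ)) := by
                rw [Real.rpow_natCast]; push_cast; ring
            _ ≤ (Fintype.card A : ℝ) ^ (3 * (T.card : ℝ) / (2 * k)) :=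
                (Real.rpow_le_rpow_left_iff ha1).mpr hqb
      _ = (Fintype.card { P : Finset G // P ∈ S.powersetCard k } : ℝ)
            * (Fintype.card A : ℝ) ^ (3 * (T.card : ℝ) / (2 * k)) := by
          rw [Finset.sum_const, Finset.card_univ, nsmul_eq_mul]
      _ ≤ ((S.card : ℝ) ^ (k:ℕ)) * (Fintype.card A : ℝ) ^ (3 * (T.card : ℝ) / (2 * k)) := by
          apply mul_le_mul_of_nonneg_right _ (Real.rpow_nonneg ha0.le _)
          have he : Fintype.card { P : Finset G // P ∈ S.powersetCard k }
              = (S.powersetCard k).card := Fintype.card_coe _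
          rw [he, Finset.card_powersetCard]
          exact_mod_cast Nat.choose_le_pow S.card k
  have hS0 : (0:ℝ) < (S.card : ℝ) := by
    have : 0 < S.card := lt_of_lt_of_le hk hSk
    exact_mod_cast this
  have hSpow : ((S.card : ℝ)) ^ (k:ℕ)
      ≤ (Fintype.card A : ℝ) ^ ((T.card : ℝ) / (2 * k)) := by
    have hlogb : (Fintype.card A : ℝ) ^ (Real.logb (Fintype.card A) S.card) = (S.card : ℝ) :=
      Real.rpow_logb ha0 (ne_of_gt ha1) hS0
    calc ((S.card : ℝ)) ^ (k:ℕ)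
        = ((Fintype.card A : ℝ) ^ (Real.logb (Fintype.card A) S.card)) ^ (k:ℕ) := by rw [hlogb]
      _ = (Fintype.card A : ℝ) ^ ((Real.logb (Fintype.card A) S.card) * k) := by
          rw [← Real.rpow_natCast ((Fintype.card A : ℝ)
            ^ (Real.logb (Fintype.card A) S.card)) k, ← Real.rpow_mul ha0.le]
      _ ≤ (Fintype.card A : ℝ) ^ ((T.card : ℝ) / (2 * k)) := by
          apply (Real.rpow_le_rpow_left_iff ha1).mpr
          rw [mul_comm]
          exact h1.le
  calc (Nat.card {w : T → A // HasPeriods k S T w} : ℝ)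
      ≤ (Nat.card (Σ P : { P : Finset G // P ∈ S.powersetCard k },
          (Quotient (Relation.EqvGen.setoid (perRel P.1 T)) → A)) : ℝ) := by
        exact_mod_cast hcard_le
    _ ≤ ((S.card : ℝ) ^ (k:ℕ)) * (Fintype.card A : ℝ) ^ (3 * (T.card : ℝ) / (2 * k)) := hsigma
    _ ≤ (Fintype.card A : ℝ) ^ ((T.card : ℝ) / (2 * k))
          * (Fintype.card A : ℝ) ^ (3 * (T.card : ℝ) / (2 * k)) :=
        mul_le_mul_of_nonneg_right hSpow (Real.rpow_nonneg ha0.le _)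
    _ = (Fintype.card A : ℝ) ^ ((T.card : ℝ) / (2 * k) + 3 * (T.card : ℝ) / (2 * k)) :=
        (Real.rpow_add ha0 _ _).symm
    _ = (Fintype.card A : ℝ) ^ (2 * (T.card : ℝ) / k) := by
        congr 1
        field_simp
        ring
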